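/- Foliated homotopy invariance: if f, g : (M,F) → (M′,F′) are foliated maps of Riemannian foliations of closed manifolds with bundle-like metrics and there is an operator h on forms preserving the basic forms such that g* − f* = dh + hd, then P_a g* P_a′ − P_a f* P_a′ = d_a(P_a h P_a′) + (P_a h P_a′) d_a′, so the two maps induce the same map on antibasic cohomology. -/
import Mathlib


/-- Foliated homotopy invariance: if `f, g` are foliated maps with pullbacks `f*, g*`
related by a chain homotopy `h` preserving basic forms (`g* − f* = d h + h d′` and
`h P_b′ = P_b h P_b′`), then
`P_a g* P_a′ − P_a f* P_a′ = d_a (P_a h P_a′) + (P_a h P_a′) d_a′`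
with `d_a = P_a d P_a`, `d_a′ = P_a′ d′ P_a′`; hence the two induced maps agree on
antibasic cohomology. -/
theorem stmt_17 {V V' : Type*} [AddCommGroup V] [Module ℝ V]
    [AddCommGroup V'] [Module ℝ V']
    (d Pa Pb : V →ₗ[ℝ] V) (d' Pa' Pb' ε' : V' →ₗ[ℝ] V')
    (hPb : Pb ∘ₗ Pb = Pb) (hPa : Pa = LinearMap.id - Pb)
    (hPb' : Pb' ∘ₗ Pb' = Pb') (hPa' : Pa' = LinearMap.id - Pb')
    (f g h : V' →ₗ[ℝ] V)
    (hhom : g - f = d ∘ₗ h + h ∘ₗ d')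
    (hhb : h ∘ₗ Pb' = Pb ∘ₗ (h ∘ₗ Pb'))
    (hPa'd : Pa' ∘ₗ d' = d' ∘ₗ Pa' + Pb' ∘ₗ ε')
    (hPad : Pa ∘ₗ d ∘ₗ Pa = Pa ∘ₗ d) :
    (Pa ∘ₗ g ∘ₗ Pa' - Pa ∘ₗ f ∘ₗ Pa'
      = (Pa ∘ₗ d ∘ₗ Pa) ∘ₗ (Pa ∘ₗ h ∘ₗ Pa')
        + (Pa ∘ₗ h ∘ₗ Pa') ∘ₗ (Pa' ∘ₗ d' ∘ₗ Pa')) ∧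
    (∀ x : V', Pa' (d' (Pa' x)) = 0 →
      ∃ y : V, Pa (g (Pa' x)) - Pa (f (Pa' x)) = Pa (d (Pa y))) := by
  -- Pointwise facts
  have paf : ∀ x : V, Pa (Pa x) = Pa x := by
    intro x
    have h1 := LinearMap.congr_fun hPb x
    simp only [LinearMap.comp_apply] at h1
    simp [hPa, h1]
  have pa'f : ∀ x : V', Pa' (Pa' x) = Pa' x := by
    intro x
    have h1 := LinearMap.congr_fun hPb' x
    simp only [LinearMap.comp_apply] at h1
    simp [hPa', h1]
  have pad : ∀ x : V, Pa (d (Pa x)) = Pa (d x) := by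
    intro x
    have h1 := LinearMap.congr_fun hPad x
    simpa using h1
  have hpbf : ∀ x : V', Pa (h (Pb' x)) = 0 := by
    intro x
    have h1 := LinearMap.congr_fun hhb x
    simp only [LinearMap.comp_apply] at h1
    have hPbPb : ∀ y : V, Pa (Pb y) = 0 := by
      intro y
      have h3 := LinearMap.congr_fun hPb y
      simp only [LinearMap.comp_apply] at h3
      simp [hPa, h3]
    rw [h1, hPbPb]
  have hpa' : ∀ x : V', Pa (h (Pa' x)) = Pa (h x) := by
    intro x
    have : Pa' x = x - Pb' x := by simp [hPa']
    rw [this, map_sub, map_sub, hpbf, sub_zero]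
  have hhomf : ∀ x : V', g x - f x = d (h x) + h (d' x) := by
    intro x
    have h1 := LinearMap.congr_fun hhom x
    simpa using h1
  have key : ∀ x : V', Pa (g (Pa' x)) - Pa (f (Pa' x))
      = Pa (d (Pa (h (Pa' x)))) + Pa (h (Pa' (d' (Pa' x)))) := by
    intro x
    rw [pad, hpa', ← map_sub, ← map_add, hhomf]
  refine ⟨?_, ?_⟩
  · ext x
    simp only [LinearMap.sub_apply, LinearMap.add_apply, LinearMap.comp_apply]
    rw [paf (h (Pa' x)), pa'f (d' (Pa' x))]
    exact key x
  · intro x hx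
    refine ⟨Pa (h (Pa' x)), ?_⟩
    have := key x
    rw [hx] at this
    simpa [paf] using this
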